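/- For every real polynomial p of degree at most 4, every constant step k > 0, and every t ∈ ℝ, (25·p(t + k) − 48·p(t) + 36·p(t − k) − 16·p(t − 2k) + 3·p(t − 3k)) = 12k · p'(t + k), where p' is the derivative of p; that is, the effective difference operator of the constant-step BDF3-TF algorithm (which equals the BDF4 operator) is exact on quartic polynomials, which is the order-raising property behind the observed fourth-order convergence. -/
import Mathlib


/-- The effective difference operator of the constant-step BDF3-TF algorithm
(the classical BDF4 operator) is exact on quartic polynomials. -/
theorem bdf4_operator_exact_on_quartics
    (p : Polynomial ℝ) (hp : p.degree ≤ 4) (k : ℝ) (hk : 0 < k) (t : ℝ) :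
    25 * p.eval (t + k) - 48 * p.eval t + 36 * p.eval (t - k)
        - 16 * p.eval (t - 2 * k) + 3 * p.eval (t - 3 * k)
      = 12 * k * p.derivative.eval (t + k) := by
  have hnd : p.natDegree < 5 :=
    Nat.lt_succ_of_le (Polynomial.natDegree_le_iff_degree_le.mpr hp)
  have hnd' : p.derivative.natDegree < 5 :=
    lt_of_le_of_lt ((Polynomial.natDegree_derivative_le p).trans (Nat.sub_le _ _)) hnd
  have he : ∀ x : ℝ, p.eval x = ∑ i ∈ Finset.range 5, p.coeff i * x ^ i :=
    fun x => Polynomial.eval_eq_sum_range' hnd x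
  have hd : ∀ x : ℝ, p.derivative.eval x
      = ∑ i ∈ Finset.range 5, p.derivative.coeff i * x ^ i :=
    fun x => Polynomial.eval_eq_sum_range' hnd' x
  have hc5 : p.coeff 5 = 0 :=
    Polynomial.coeff_eq_zero_of_natDegree_lt hnd
  simp only [he, hd, Polynomial.coeff_derivative, Finset.sum_range_succ,
    Finset.sum_range_zero, hc5]
  push_cast
  ring
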